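/- Let k > 1 and let (a_k, …, a_{k-s}), (b_k, …, b_{k-t}), (c_k, …, c_{k-u}) be integer sequences admissible for k. If Σ_{i=0}^{s} C(a_{k-i}, k-i) ≥ Σ_{i=0}^{t} C(b_{k-i}, k-i) and Σ_{i=0}^{u} C(c_{k-i}, k-i) = Σ_{i=0}^{s} C(a_{k-i}, k-i) + Σ_{i=0}^{t} C(b_{k-i}, k-1-i), then Σ_{i=0}^{u} C(c_{k-i}, k+1-i) ≥ Σ_{i=0}^{s} C(a_{k-i}, k+1-i) + Σ_{i=0}^{t} C(b_{k-i}, k-i). -/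

import Mathlib

attribute [-instance] instDecidableEqFin

/-- Binomial coefficient `C(n, t)` with an integer lower index, `0` when `t < 0`. -/
def chooseZ (n : ℕ) (t : ℤ) : ℕ := if 0 ≤ t then n.choose t.toNat else 0

/-- `Σ_{i=0}^{s} C(a_{k-i}, j-i)`, where `a i` stands for `a_{k-i}`. -/
def cSumZ (a : ℕ → ℕ) (s : ℕ) (j : ℤ) : ℕ :=
  ∑ i ∈ Finset.range (s + 1), chooseZ (a i) (j - i)

/-- `a i` stands for `n_{k-i}`: the sequence `(n_k, …, n_{k-s})` is admissible for `k` iff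
`n_k > n_{k-1} > … > n_{k-s} ≥ k-s > 0`. -/
def Admissible (k s : ℕ) (a : ℕ → ℕ) : Prop :=
  s < k ∧ (∀ i < s, a (i + 1) < a i) ∧ k - s ≤ a s

namespace LinkAux

open Finset Finset.Colex
open scoped FinsetFamily

lemma cSumZ_eq_sum (a : ℕ → ℕ) (s j : ℕ) (h : s ≤ j) :
    cSumZ a s (j : ℤ) = ∑ i ∈ Finset.range (s + 1), (a i).choose (j - i) := by
  unfold cSumZ chooseZ
  refine Finset.sum_congr rfl fun i hi => ?_
  rw [Finset.mem_range] at hi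
  rw [if_pos (by omega : (0:ℤ) ≤ (j:ℤ) - i)]
  congr 1
  omega

variable {n : ℕ}

/-- The "up-closure": `(j+1)`-sets all of whose `j`-subsets lie in `𝒮`. -/
def UU (j : ℕ) (𝒮 : Finset (Finset (Fin n))) : Finset (Finset (Fin n)) :=
  (Finset.univ.powersetCard (j + 1)).filter (fun T => ∀ x ∈ T, T.erase x ∈ 𝒮)

lemma mem_UU {j : ℕ} {𝒮 : Finset (Finset (Fin n))} {T : Finset (Fin n)} :
    T ∈ UU j 𝒮 ↔ #T = j + 1 ∧ ∀ x ∈ T, T.erase x ∈ 𝒮 := by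
  simp [UU, Finset.mem_powersetCard_univ]

lemma UU_mono {j : ℕ} {𝒮 𝒯 : Finset (Finset (Fin n))} (h : 𝒮 ⊆ 𝒯) : UU j 𝒮 ⊆ UU j 𝒯 := by
  intro T hT
  rw [mem_UU] at hT ⊢
  exact ⟨hT.1, fun x hx => h (hT.2 x hx)⟩

/-- The main construction: for a strictly decreasing pattern `d` of length `r+1`, there is an
initial segment of colex on `j`-subsets of `Fin n` with prescribed cardinality, shadow bound and
up-closure cardinality. -/
lemma pack : ∀ (r : ℕ) (j : ℕ) (d : ℕ → ℕ), 1 ≤ j → r + 1 ≤ j →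
    (∀ i < r, d (i + 1) < d i) → d 0 + 1 < n →
    ∃ 𝒮 : Finset (Finset (Fin n)),
      IsInitSeg 𝒮 j ∧
      (∀ T ∈ 𝒮, ∀ x ∈ T, (x : ℕ) ≤ d 0) ∧
      #𝒮 = ∑ i ∈ Finset.range (r + 1), (d i).choose (j - i) ∧
      #(∂ 𝒮) ≤ ∑ i ∈ Finset.range (r + 1), (d i).choose (j - 1 - i) ∧
      #(UU j 𝒮) = ∑ i ∈ Finset.range (r + 1), (d i).choose (j + 1 - i) := by
  intro r
  induction r with
  | zero =>
    intro j d hj hrj hdec hdn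
    set D : Fin n := ⟨d 0, by omega⟩ with hD
    refine ⟨powersetCard j (Iio D), ?_, ?_, ?_, ?_, ?_⟩
    · constructor
      · intro T hT
        rw [Finset.mem_coe, mem_powersetCard] at hT
        exact hT.2
      · rintro S T hS ⟨hlt, hcard⟩
        rw [mem_powersetCard] at hS ⊢
        refine ⟨fun x hx => ?_, hcard⟩
        rw [Finset.mem_Iio]
        exact Colex.forall_lt_mono hlt.le (fun b hb => Finset.mem_Iio.1 (hS.1 hb)) x hx
    · intro T hT x hx
      rw [mem_powersetCard] at hT
      have h6' : x < D := Finset.mem_Iio.1 (hT.1 hx)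
      have h6 : (x : ℕ) < d 0 := h6'
      omega
    · rw [card_powersetCard, Fin.card_Iio]
      simp; rfl
    · have hsub : ∂ (powersetCard j (Iio D)) ⊆ powersetCard (j - 1) (Iio D) := by
        intro t ht
        rw [mem_shadow_iff] at ht
        obtain ⟨S, hS, x, hxS, rfl⟩ := ht
        rw [mem_powersetCard] at hS ⊢
        exact ⟨(erase_subset _ _).trans hS.1, by rw [card_erase_of_mem hxS, hS.2]⟩
      calc #(∂ (powersetCard j (Iio D))) ≤ #(powersetCard (j - 1) (Iio D)) := card_le_card hsub
        _ = (d 0).choose (j - 1) := by rw [card_powersetCard, Fin.card_Iio]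
        _ = _ := by simp
    · have hUUeq : UU j (powersetCard j (Iio D)) = powersetCard (j + 1) (Iio D) := by
        ext T
        rw [mem_UU, mem_powersetCard]
        constructor
        · rintro ⟨hcard, h⟩
          refine ⟨fun x hx => ?_, hcard⟩
          obtain ⟨y, hy, hyx⟩ : ∃ y ∈ T, y ≠ x :=
            Finset.exists_mem_ne (by omega) x
          have := h y hy
          rw [mem_powersetCard] at this
          exact this.1 (Finset.mem_erase.2 ⟨hyx.symm, hx⟩)
        · rintro ⟨hsub, hcard⟩
          refine ⟨hcard, fun x hx => ?_⟩
          rw [mem_powersetCard]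
          exact ⟨(erase_subset _ _).trans hsub, by rw [card_erase_of_mem hx, hcard]; omega⟩
      rw [hUUeq, card_powersetCard, Fin.card_Iio]
      simp; rfl
  | succ r ih =>
    intro j d hj hrj hdec hdn
    have hj2 : 2 ≤ j := by omega
    obtain ⟨𝒮', h𝒮'init, h𝒮'elt, h𝒮'card, h𝒮'shadow, h𝒮'UU⟩ :=
      ih (j - 1) (fun i => d (i + 1)) (by omega) (by omega)
        (fun i hi => hdec (i + 1) (by omega))
        (by have h := hdec 0 (by omega); show d (0 + 1) + 1 < n; omega)
    have h𝒮'elt2 : ∀ T ∈ 𝒮', ∀ x ∈ T, (x : ℕ) ≤ d 1 := h𝒮'elt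
    have h𝒮'card2 : #𝒮' = ∑ i ∈ Finset.range (r + 1), (d (i + 1)).choose (j - 1 - i) := h𝒮'card
    have h𝒮'shadow2 : #(∂ 𝒮') ≤ ∑ i ∈ Finset.range (r + 1), (d (i + 1)).choose (j - 1 - 1 - i) :=
      h𝒮'shadow
    have h𝒮'UU2 : #(UU (j - 1) 𝒮') = ∑ i ∈ Finset.range (r + 1), (d (i + 1)).choose (j - 1 + 1 - i) :=
      h𝒮'UU
    set D : Fin n := ⟨d 0, by omega⟩ with hD
    have hd10 : d 1 < d 0 := hdec 0 (by omega)
    have h𝒮'sized : ∀ T ∈ 𝒮', #T = j - 1 := fun T hT => h𝒮'init.1 hT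
    have h𝒮'lt : ∀ T ∈ 𝒮', ∀ x ∈ T, x < D := by
      intro T hT x hx
      have h7 := h𝒮'elt2 T hT x hx
      show (x : ℕ) < d 0
      omega
    have h𝒮'notmem : ∀ T ∈ 𝒮', D ∉ T := by
      intro T hT hDT
      exact absurd (h𝒮'lt T hT D hDT) (lt_irrefl _)
    set 𝒮 : Finset (Finset (Fin n)) :=
      powersetCard j (Iio D) ∪ 𝒮'.image (insert D) with h𝒮
    have hmem𝒮 : ∀ {T : Finset (Fin n)}, T ∈ 𝒮 ↔
        (T ⊆ Iio D ∧ #T = j) ∨ ∃ T₂ ∈ 𝒮', T = insert D T₂ := by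
      intro T
      simp only [h𝒮, Finset.mem_union, mem_powersetCard, Finset.mem_image]
      constructor
      · rintro (h | ⟨T₂, hT₂, rfl⟩)
        · exact Or.inl h
        · exact Or.inr ⟨T₂, hT₂, rfl⟩
      · rintro (h | ⟨T₂, hT₂, rfl⟩)
        · exact Or.inl h
        · exact Or.inr ⟨T₂, hT₂, rfl⟩
    have hsized : ∀ T ∈ 𝒮, #T = j := by
      intro T hT
      rw [hmem𝒮] at hT
      rcases hT with ⟨_, h⟩ | ⟨T₂, hT₂, rfl⟩
      · exact h
      · rw [card_insert_of_notMem (h𝒮'notmem _ hT₂), h𝒮'sized _ hT₂]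
        omega
    have helt : ∀ T ∈ 𝒮, ∀ x ∈ T, (x : ℕ) ≤ d 0 := by
      intro T hT x hx
      rw [hmem𝒮] at hT
      rcases hT with ⟨h, _⟩ | ⟨T₂, hT₂, rfl⟩
      · have h8' : x < D := Finset.mem_Iio.1 (h hx)
        have h8 : (x : ℕ) < d 0 := h8'
        omega
      · rcases Finset.mem_insert.1 hx with rfl | hx2
        · exact le_refl _
        · have h9 := h𝒮'elt2 _ hT₂ _ hx2
          omega
    have hinit : IsInitSeg 𝒮 j := by
      constructor
      · intro T hT
        exact hsized T (Finset.mem_coe.1 hT)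
      · rintro S T hS ⟨hlt, hcard⟩
        rw [hmem𝒮] at hS
        have hSle : ∀ b ∈ S, b ≤ D := by
          rcases hS with ⟨h, _⟩ | ⟨T₂, hT₂, rfl⟩
          · intro b hb
            exact (Finset.mem_Iio.1 (h hb)).le
          · intro b hb
            rcases Finset.mem_insert.1 hb with rfl | hb2
            · exact le_refl _
            · exact (h𝒮'lt _ hT₂ _ hb2).le
        have hTle : ∀ b ∈ T, b ≤ D := Colex.forall_le_mono hlt.le hSle
        rw [hmem𝒮]
        by_cases hDT : D ∈ T
        · rcases hS with ⟨hSsub, hScard⟩ | ⟨T₂, hT₂, rfl⟩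
          · have : D < D :=
              Colex.forall_lt_mono hlt.le (fun b hb => Finset.mem_Iio.1 (hSsub hb)) D hDT
            exact absurd this (lt_irrefl _)
          · refine Or.inr ⟨T.erase D, ?_, (Finset.insert_erase hDT).symm⟩
            have hsd : toColex (T \ {D}) < toColex ((insert D T₂) \ {D}) := by
              rw [Colex.toColex_sdiff_lt_toColex_sdiff (Finset.singleton_subset_iff.2 hDT)
                (Finset.singleton_subset_iff.2 (Finset.mem_insert_self _ _))]
              exact hlt
            rw [Finset.sdiff_singleton_eq_erase, Finset.sdiff_singleton_eq_erase,
              Finset.erase_insert (h𝒮'notmem _ hT₂)] at hsd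
            exact h𝒮'init.2 hT₂ ⟨hsd, by rw [card_erase_of_mem hDT, hcard]⟩
        · refine Or.inl ⟨fun x hx => ?_, hcard⟩
          rw [Finset.mem_Iio]
          exact lt_of_le_of_ne (hTle x hx) (fun h => hDT (h ▸ hx))
    have hdisj : Disjoint (powersetCard j (Iio D)) (𝒮'.image (insert D)) := by
      rw [Finset.disjoint_left]
      rintro T hT1 hT2
      rw [mem_powersetCard] at hT1
      obtain ⟨T₂, hT₂, rfl⟩ := Finset.mem_image.1 hT2
      exact absurd (Finset.mem_Iio.1 (hT1.1 (Finset.mem_insert_self D T₂))) (lt_irrefl _)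
    have hinj : Set.InjOn (insert D) (𝒮' : Set (Finset (Fin n))) := by
      intro x hx y hy hxy
      have h2 : (insert D x).erase D = (insert D y).erase D := by rw [hxy]
      rwa [Finset.erase_insert (h𝒮'notmem _ hx), Finset.erase_insert (h𝒮'notmem _ hy)] at h2
    have hcard𝒮 : #𝒮 = ∑ i ∈ Finset.range (r + 1 + 1), (d i).choose (j - i) := by
      rw [h𝒮, card_union_of_disjoint hdisj, Finset.card_image_of_injOn hinj,
        card_powersetCard, Fin.card_Iio, h𝒮'card2,
        Finset.sum_range_succ' (fun i => (d i).choose (j - i)) (r + 1),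
        Nat.add_comm (∑ i ∈ Finset.range (r + 1), (d (i + 1)).choose (j - (i + 1)))
          ((d 0).choose (j - 0))]
      congr 1
      exact Finset.sum_congr rfl fun i hi => by
        rw [show j - 1 - i = j - (i + 1) from by omega]
    have hshadow : #(∂ 𝒮) ≤ ∑ i ∈ Finset.range (r + 1 + 1), (d i).choose (j - 1 - i) := by
      have hsub : ∂ 𝒮 ⊆ powersetCard (j - 1) (Iio D) ∪ (∂ 𝒮').image (insert D) := by
        intro t ht
        rw [mem_shadow_iff] at ht
        obtain ⟨S, hS, x, hxS, rfl⟩ := ht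
        rw [hmem𝒮] at hS
        rcases hS with ⟨hSsub, hScard⟩ | ⟨T₂, hT₂, rfl⟩
        · apply Finset.mem_union_left
          rw [mem_powersetCard]
          exact ⟨(erase_subset _ _).trans hSsub, by rw [card_erase_of_mem hxS, hScard]⟩
        · by_cases hxD : x = D
          · subst hxD
            apply Finset.mem_union_left
            rw [mem_powersetCard, Finset.erase_insert (h𝒮'notmem _ hT₂)]
            exact ⟨fun y hy => Finset.mem_Iio.2 (h𝒮'lt _ hT₂ _ hy), h𝒮'sized _ hT₂⟩
          · apply Finset.mem_union_right
            have hxT₂ : x ∈ T₂ := Finset.mem_of_mem_insert_of_ne hxS hxD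
            rw [Finset.erase_insert_of_ne (Ne.symm hxD)]
            exact Finset.mem_image.2 ⟨T₂.erase x, mem_shadow_iff.2 ⟨T₂, hT₂, x, hxT₂, rfl⟩, rfl⟩
      calc #(∂ 𝒮) ≤ #(powersetCard (j - 1) (Iio D) ∪ (∂ 𝒮').image (insert D)) :=
            card_le_card hsub
        _ ≤ #(powersetCard (j - 1) (Iio D)) + #((∂ 𝒮').image (insert D)) := card_union_le _ _
        _ ≤ (d 0).choose (j - 1) + #(∂ 𝒮') := by
            rw [card_powersetCard, Fin.card_Iio]
            exact Nat.add_le_add_left Finset.card_image_le _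
        _ ≤ (d 0).choose (j - 1) +
              ∑ i ∈ Finset.range (r + 1), (d (i + 1)).choose (j - 1 - 1 - i) :=
            Nat.add_le_add_left h𝒮'shadow2 _
        _ = ∑ i ∈ Finset.range (r + 1 + 1), (d i).choose (j - 1 - i) := by
            rw [Finset.sum_range_succ' (fun i => (d i).choose (j - 1 - i)) (r + 1),
              Nat.add_comm (∑ i ∈ Finset.range (r + 1), (d (i + 1)).choose (j - 1 - (i + 1)))
                ((d 0).choose (j - 1 - 0))]
            congr 1
            exact Finset.sum_congr rfl fun i hi => by
              rw [show j - 1 - 1 - i = j - 1 - (i + 1) from by omega]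
    have hUUelt : ∀ T ∈ UU (j - 1) 𝒮', ∀ x ∈ T, x < D := by
      intro T hT x hx
      rw [mem_UU] at hT
      obtain ⟨y, hy, hyx⟩ : ∃ y ∈ T, y ≠ x :=
        Finset.exists_mem_ne (by omega) x
      exact h𝒮'lt _ (hT.2 y hy) x (Finset.mem_erase.2 ⟨hyx.symm, hx⟩)
    have hUU : UU j 𝒮 = powersetCard (j + 1) (Iio D) ∪ (UU (j - 1) 𝒮').image (insert D) := by
      ext T
      rw [mem_UU]
      constructor
      · rintro ⟨hcard, h⟩
        have hTle : ∀ x ∈ T, (x : ℕ) ≤ d 0 := by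
          intro x hx
          obtain ⟨y, hy, hyx⟩ : ∃ y ∈ T, y ≠ x :=
            Finset.exists_mem_ne (by omega) x
          exact helt _ (h y hy) x (Finset.mem_erase.2 ⟨hyx.symm, hx⟩)
        by_cases hDT : D ∈ T
        · apply Finset.mem_union_right
          refine Finset.mem_image.2 ⟨T.erase D, ?_, Finset.insert_erase hDT⟩
          rw [mem_UU]
          refine ⟨by rw [card_erase_of_mem hDT]; omega, ?_⟩
          intro x hx
          have hxD : x ≠ D := (Finset.mem_erase.1 hx).1
          have hxT : x ∈ T := (Finset.mem_erase.1 hx).2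
          have hTx : T.erase x ∈ 𝒮 := h x hxT
          rw [hmem𝒮] at hTx
          rcases hTx with ⟨hsub, _⟩ | ⟨T₂, hT₂, hTe⟩
          · exact absurd (Finset.mem_Iio.1 (hsub (Finset.mem_erase.2 ⟨Ne.symm hxD, hDT⟩)))
              (lt_irrefl _)
          · have h3 : (T.erase x).erase D = T₂ := by
              rw [hTe, Finset.erase_insert (h𝒮'notmem _ hT₂)]
            rw [Finset.erase_right_comm, h3]
            exact hT₂
        · apply Finset.mem_union_left
          rw [mem_powersetCard]
          refine ⟨fun x hx => Finset.mem_Iio.2 ?_, hcard⟩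
          have h4 := hTle x hx
          have hxD : x ≠ D := fun h => hDT (h ▸ hx)
          have h5 : (x : ℕ) ≠ d 0 := fun hc => hxD (Fin.ext hc)
          show (x : ℕ) < d 0
          omega
      · intro hT
        rcases Finset.mem_union.1 hT with hT | hT
        · rw [mem_powersetCard] at hT
          refine ⟨hT.2, fun x hx => ?_⟩
          rw [hmem𝒮]
          exact Or.inl ⟨(erase_subset _ _).trans hT.1, by rw [card_erase_of_mem hx, hT.2]; omega⟩
        · obtain ⟨T₂, hT₂, rfl⟩ := Finset.mem_image.1 hT
          have hT₂' := hT₂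
          rw [mem_UU] at hT₂'
          have hDT₂ : D ∉ T₂ := fun hc => absurd (hUUelt T₂ hT₂ D hc) (lt_irrefl _)
          refine ⟨by rw [card_insert_of_notMem hDT₂, hT₂'.1]; omega, ?_⟩
          intro x hx
          rcases Finset.mem_insert.1 hx with rfl | hx2
          · rw [Finset.erase_insert hDT₂, hmem𝒮]
            refine Or.inl ⟨fun y hy => Finset.mem_Iio.2 (hUUelt T₂ hT₂ y hy), ?_⟩
            rw [hT₂'.1]; omega
          · have hxD : x ≠ D := fun h => hDT₂ (h ▸ hx2)
            rw [Finset.erase_insert_of_ne (Ne.symm hxD), hmem𝒮]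
            exact Or.inr ⟨T₂.erase x, hT₂'.2 x hx2, rfl⟩
    have hdisj2 : Disjoint (powersetCard (j + 1) (Iio D)) ((UU (j - 1) 𝒮').image (insert D)) := by
      rw [Finset.disjoint_left]
      rintro T hT1 hT2
      rw [mem_powersetCard] at hT1
      obtain ⟨T₂, hT₂, rfl⟩ := Finset.mem_image.1 hT2
      exact absurd (Finset.mem_Iio.1 (hT1.1 (Finset.mem_insert_self D T₂))) (lt_irrefl _)
    have hinj2 : Set.InjOn (insert D) (UU (j - 1) 𝒮' : Set (Finset (Fin n))) := by
      intro x hx y hy hxy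
      have hDx : D ∉ x := fun hc => absurd (hUUelt _ hx D hc) (lt_irrefl _)
      have hDy : D ∉ y := fun hc => absurd (hUUelt _ hy D hc) (lt_irrefl _)
      have h2 : (insert D x).erase D = (insert D y).erase D := by rw [hxy]
      rwa [Finset.erase_insert hDx, Finset.erase_insert hDy] at h2
    have hcardUU : #(UU j 𝒮) = ∑ i ∈ Finset.range (r + 1 + 1), (d i).choose (j + 1 - i) := by
      rw [hUU, card_union_of_disjoint hdisj2, Finset.card_image_of_injOn hinj2,
        card_powersetCard, Fin.card_Iio, h𝒮'UU2,
        Finset.sum_range_succ' (fun i => (d i).choose (j + 1 - i)) (r + 1),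
        Nat.add_comm (∑ i ∈ Finset.range (r + 1), (d (i + 1)).choose (j + 1 - (i + 1)))
          ((d 0).choose (j + 1 - 0))]
      congr 1
      exact Finset.sum_congr rfl fun i hi => by
        rw [show j - 1 + 1 - i = j + 1 - (i + 1) from by omega]
    exact ⟨𝒮, hinit, helt, hcard𝒮, hshadow, hcardUU⟩

lemma toColex_compl_lt {s t : Finset (Fin n)} (h : toColex s < toColex t) :
    toColex tᶜ < toColex sᶜ := by
  obtain ⟨x, hxt, hxs, hx⟩ := Colex.toColex_lt_toColex_iff_exists_forall_lt.1 h
  refine Colex.toColex_lt_toColex_iff_exists_forall_lt.2 ⟨x, ?_, ?_, ?_⟩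
  · rwa [Finset.mem_compl]
  · rw [Finset.mem_compl, not_not]
    exact hxt
  · intro b hb hbs
    rw [Finset.mem_compl] at hb
    rw [Finset.mem_compl, not_not] at hbs
    exact hx b hbs hb

lemma card_UU_le {j : ℕ} (hj : j ≤ n) {𝒢 𝒞 : Finset (Finset (Fin n))}
    (h𝒢 : 𝒢 ⊆ powersetCard j Finset.univ) (h𝒞 : IsInitSeg 𝒞 j) (hcard : #𝒢 ≤ #𝒞) :
    #(UU j 𝒢) ≤ #(UU j 𝒞) := by
  have h𝒞sub : 𝒞 ⊆ powersetCard j Finset.univ := fun S hS =>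
    Finset.mem_powersetCard_univ.2 (h𝒞.1 hS)
  set X := powersetCard j (Finset.univ : Finset (Fin n)) with hX
  have key : ∀ 𝒳 : Finset (Finset (Fin n)),
      UU j 𝒳 = powersetCard (j + 1) Finset.univ \ ∂⁺ (X \ 𝒳) := by
    intro 𝒳
    ext T
    rw [mem_UU, Finset.mem_sdiff, Finset.mem_powersetCard_univ]
    constructor
    · rintro ⟨hcardT, h⟩
      refine ⟨hcardT, fun hc => ?_⟩
      rw [mem_upShadow_iff_erase_mem] at hc
      obtain ⟨x, hx, hex⟩ := hc
      rw [Finset.mem_sdiff] at hex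
      exact hex.2 (h x hx)
    · rintro ⟨hcardT, h⟩
      refine ⟨hcardT, fun x hx => ?_⟩
      by_contra hc
      exact h (mem_upShadow_iff_erase_mem.2 ⟨x, hx, Finset.mem_sdiff.2
        ⟨Finset.mem_powersetCard_univ.2 (by rw [card_erase_of_mem hx, hcardT]; omega), hc⟩⟩)
  have hsharp : ∀ 𝒳 : Finset (Finset (Fin n)),
      ∂⁺ (X \ 𝒳) ⊆ powersetCard (j + 1) Finset.univ := by
    intro 𝒳 T hT
    rw [Finset.mem_powersetCard_univ]
    have hsz : ((X \ 𝒳 : Finset (Finset (Fin n))) : Set (Finset (Fin n))).Sized j := by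
      intro S hS
      exact Finset.mem_powersetCard_univ.1 (Finset.mem_sdiff.1 (Finset.mem_coe.1 hS)).1
    exact hsz.upShadow (Finset.mem_coe.2 hT)
  have hszc : ∀ 𝒳 : Finset (Finset (Fin n)), 𝒳 ⊆ X →
      (((X \ 𝒳)ᶜˢ : Finset (Finset (Fin n))) : Set (Finset (Fin n))).Sized (n - j) := by
    intro 𝒳 h𝒳 S hS
    rw [Finset.mem_coe, Finset.mem_compls] at hS
    have h1 : #(Sᶜ) = j := Finset.mem_powersetCard_univ.1 (Finset.mem_sdiff.1 hS).1
    have h2 := Finset.card_compl Sᶜ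
    rw [compl_compl, Fintype.card_fin] at h2
    omega
  have hinitC : IsInitSeg ((X \ 𝒞)ᶜˢ) (n - j) := by
    refine ⟨hszc 𝒞 h𝒞sub, ?_⟩
    rintro S T hS ⟨hlt, hcardT⟩
    rw [Finset.mem_compls] at hS ⊢
    rw [Finset.mem_sdiff] at hS ⊢
    refine ⟨Finset.mem_powersetCard_univ.2 ?_, fun hc => ?_⟩
    · rw [Finset.card_compl, hcardT, Fintype.card_fin]
      omega
    · have hco : toColex Sᶜ < toColex Tᶜ := toColex_compl_lt hlt
      have hSc : #(Sᶜ) = j := Finset.mem_powersetCard_univ.1 hS.1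
      exact hS.2 (h𝒞.2 hc ⟨hco, hSc⟩)
  have hkk : #(∂ ((X \ 𝒞)ᶜˢ)) ≤ #(∂ ((X \ 𝒢)ᶜˢ)) := by
    apply Finset.kruskal_katona (hszc 𝒢 h𝒢) _ hinitC
    rw [Finset.card_compls, Finset.card_compls, Finset.card_sdiff_of_subset h𝒞sub,
      Finset.card_sdiff_of_subset h𝒢]
    omega
  have hup : #(∂⁺ (X \ 𝒞)) ≤ #(∂⁺ (X \ 𝒢)) := by
    have e1 : #(∂ ((X \ 𝒞)ᶜˢ)) = #(∂⁺ (X \ 𝒞)) := by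
      rw [Finset.shadow_compls, Finset.card_compls]
    have e2 : #(∂ ((X \ 𝒢)ᶜˢ)) = #(∂⁺ (X \ 𝒢)) := by
      rw [Finset.shadow_compls, Finset.card_compls]
    omega
  rw [key 𝒢, key 𝒞, Finset.card_sdiff_of_subset (hsharp 𝒢), Finset.card_sdiff_of_subset (hsharp 𝒞)]
  exact Nat.sub_le_sub_left hup _

end LinkAux

section Final
open Finset Finset.Colex LinkAux
open scoped FinsetFamily

theorem link_subcomplex (k s t u : ℕ) (a b c : ℕ → ℕ) (hk : 1 < k)
    (ha : Admissible k s a) (hb : Admissible k t b) (hc : Admissible k u c)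
    (hab : cSumZ b t (k : ℤ) ≤ cSumZ a s (k : ℤ))
    (heq : cSumZ c u (k : ℤ) = cSumZ a s (k : ℤ) + cSumZ b t ((k : ℤ) - 1)) :
    cSumZ a s ((k : ℤ) + 1) + cSumZ b t (k : ℤ) ≤ cSumZ c u ((k : ℤ) + 1) := by
  classical
  obtain ⟨hsk, hadec, -⟩ := ha
  obtain ⟨htk, hbdec, -⟩ := hb
  obtain ⟨huk, hcdec, -⟩ := hc
  set n : ℕ := a 0 + b 0 + c 0 + k + 2 with hn
  obtain ⟨𝒜, h𝒜init, h𝒜elt, h𝒜card, h𝒜shadow, h𝒜UU⟩ :=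
    LinkAux.pack (n := n) s k a (by omega) (by omega) hadec (by omega)
  obtain ⟨ℬ, hℬinit, hℬelt, hℬcard, hℬshadow, hℬUU⟩ :=
    LinkAux.pack (n := n) t k b (by omega) (by omega) hbdec (by omega)
  obtain ⟨𝒞, h𝒞init, h𝒞elt, h𝒞card, h𝒞shadow, h𝒞UU⟩ :=
    LinkAux.pack (n := n) u k c (by omega) (by omega) hcdec (by omega)
  -- translate the `cSumZ` values into plain sums
  have hcast1 : ((k : ℤ) + 1) = (((k + 1 : ℕ)) : ℤ) := by push_cast; ring
  have hcast2 : ((k : ℤ) - 1) = (((k - 1 : ℕ)) : ℤ) := by omega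
  have hA : cSumZ a s (k : ℤ) = #𝒜 := by
    rw [LinkAux.cSumZ_eq_sum a s k (by omega), h𝒜card]
  have hB : cSumZ b t (k : ℤ) = #ℬ := by
    rw [LinkAux.cSumZ_eq_sum b t k (by omega), hℬcard]
  have hC : cSumZ c u (k : ℤ) = #𝒞 := by
    rw [LinkAux.cSumZ_eq_sum c u k (by omega), h𝒞card]
  have hA1 : cSumZ a s ((k : ℤ) + 1) = #(UU k 𝒜) := by
    rw [hcast1, LinkAux.cSumZ_eq_sum a s (k + 1) (by omega), h𝒜UU]
  have hC1 : cSumZ c u ((k : ℤ) + 1) = #(UU k 𝒞) := by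
    rw [hcast1, LinkAux.cSumZ_eq_sum c u (k + 1) (by omega), h𝒞UU]
  have hBm1 : cSumZ b t ((k : ℤ) - 1) = ∑ i ∈ Finset.range (t + 1), (b i).choose (k - 1 - i) := by
    rw [hcast2, LinkAux.cSumZ_eq_sum b t (k - 1) (by omega)]
  -- basic facts
  set M : Fin n := ⟨n - 1, by omega⟩ with hM
  have hMval : (M : ℕ) = n - 1 := rfl
  have hMA : ∀ T ∈ 𝒜, M ∉ T := by
    intro T hT hMT
    have := h𝒜elt T hT M hMT
    rw [hMval] at this
    omega
  have hMB : ∀ T ∈ ℬ, M ∉ T := by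
    intro T hT hMT
    have := hℬelt T hT M hMT
    rw [hMval] at this
    omega
  have hMshB : ∀ T ∈ ∂ ℬ, M ∉ T := by
    intro T hT hMT
    rw [mem_shadow_iff] at hT
    obtain ⟨S, hS, x, hxS, rfl⟩ := hT
    exact hMB S hS (Finset.mem_of_mem_erase hMT)
  have hℬsubA : ℬ ⊆ 𝒜 := by
    rcases h𝒜init.total hℬinit with h | h
    · have hAB : 𝒜 = ℬ := Finset.eq_of_subset_of_card_le h (by rw [hA, hB] at hab; exact hab)
      rw [hAB]
    · exact h
  -- the family 𝒢
  set 𝒢 : Finset (Finset (Fin n)) := 𝒜 ∪ (∂ ℬ).image (insert M) with h𝒢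
  have h𝒢sub : 𝒢 ⊆ powersetCard k Finset.univ := by
    rw [h𝒢]
    apply Finset.union_subset
    · exact fun S hS => Finset.mem_powersetCard_univ.2 (h𝒜init.1 hS)
    · intro S hS
      obtain ⟨R, hR, rfl⟩ := Finset.mem_image.1 hS
      rw [Finset.mem_powersetCard_univ, Finset.card_insert_of_notMem (hMshB R hR)]
      have : #R = k - 1 := hℬinit.1.shadow (Finset.mem_coe.2 hR)
      omega
  have h𝒢card : #𝒢 ≤ #𝒞 := by
    have h1 : #𝒢 ≤ #𝒜 + #((∂ ℬ).image (insert M)) := Finset.card_union_le _ _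
    have h2 : #((∂ ℬ).image (insert M)) ≤ #(∂ ℬ) := Finset.card_image_le
    have h3 : #𝒞 = #𝒜 + cSumZ b t ((k : ℤ) - 1) := by rw [← hC, ← hA, heq]
    have h4 : #(∂ ℬ) ≤ cSumZ b t ((k : ℤ) - 1) := by rw [hBm1]; exact hℬshadow
    omega
  have hUle : #(UU k 𝒢) ≤ #(UU k 𝒞) :=
    LinkAux.card_UU_le (by omega) h𝒢sub h𝒞init h𝒢card
  -- lower bound for `UU k 𝒢`
  have hMnotUU : ∀ T ∈ UU k 𝒜, M ∉ T := by
    intro T hT hMT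
    rw [LinkAux.mem_UU] at hT
    obtain ⟨y, hy, hyM⟩ : ∃ y ∈ T, y ≠ M :=
      Finset.exists_mem_ne (by omega) M
    exact hMA _ (hT.2 y hy) (Finset.mem_erase.2 ⟨Ne.symm hyM, hMT⟩)
  have himage : ℬ.image (insert M) ⊆ UU k 𝒢 := by
    intro T hT
    obtain ⟨R, hR, rfl⟩ := Finset.mem_image.1 hT
    rw [LinkAux.mem_UU]
    constructor
    · rw [Finset.card_insert_of_notMem (hMB R hR), hℬinit.1 hR]
    · intro x hx
      rcases Finset.mem_insert.1 hx with rfl | hx2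
      · rw [Finset.erase_insert (hMB R hR), h𝒢]
        exact Finset.mem_union_left _ (hℬsubA hR)
      · have hxM : x ≠ M := fun hc => (hMB R hR) (hc ▸ hx2)
        rw [Finset.erase_insert_of_ne (Ne.symm hxM), h𝒢]
        exact Finset.mem_union_right _ (Finset.mem_image.2
          ⟨R.erase x, mem_shadow_iff.2 ⟨R, hR, x, hx2, rfl⟩, rfl⟩)
  have hdisjB : Disjoint (UU k 𝒜) (ℬ.image (insert M)) := by
    rw [Finset.disjoint_left]
    rintro T hT1 hT2
    obtain ⟨R, hR, rfl⟩ := Finset.mem_image.1 hT2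
    exact hMnotUU _ hT1 (Finset.mem_insert_self _ _)
  have hinjB : Set.InjOn (insert M) (ℬ : Set (Finset (Fin n))) := by
    intro x hx y hy hxy
    have h2 : (insert M x).erase M = (insert M y).erase M := by rw [hxy]
    rwa [Finset.erase_insert (hMB _ hx), Finset.erase_insert (hMB _ hy)] at h2
  have hlow : #(UU k 𝒜) + #ℬ ≤ #(UU k 𝒢) := by
    have hsub2 : UU k 𝒜 ∪ ℬ.image (insert M) ⊆ UU k 𝒢 :=
      Finset.union_subset (LinkAux.UU_mono (by rw [h𝒢]; exact Finset.subset_union_left)) himage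
    calc #(UU k 𝒜) + #ℬ = #(UU k 𝒜 ∪ ℬ.image (insert M)) := by
          rw [card_union_of_disjoint hdisjB, Finset.card_image_of_injOn hinjB]
      _ ≤ #(UU k 𝒢) := Finset.card_le_card hsub2
  omega

end Final
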